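/- Let U be an [n,k]_{q^m/q} system with n = 2m. Suppose there exists an F_{q^m}-subspace M of F_{q^m}^k of codimension 2 with U ∩ M = {0}. Then U is 2-spannable; indeed for any two distinct hyperplanes H₁, H₂ containing M, U = (U ∩ H₁) ⊕ (U ∩ H₂). -/

import Mathlib

open Module Submodule

variable (Fq : Type*) {L : Type*} [Field Fq] [Field L] [Algebra Fq L]

/-- The rank support of a vector `x ∈ L^n` (L = F_{q^m}, Fq = F_q): the `Fq`-span of the
rows of its coordinate matrix, equivalently the span of all `(f (x 1), …, f (x n))` for
`Fq`-linear functionals `f : L → Fq`. -/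
def rsupp {n : ℕ} (x : Fin n → L) : Submodule Fq (Fin n → Fq) :=
  Submodule.span Fq {v | ∃ f : L →ₗ[Fq] Fq, v = fun j => f (x j)}

/-- The rank (weight) of a vector. -/
noncomputable def rrk {n : ℕ} (x : Fin n → L) : ℕ :=
  Module.finrank Fq (rsupp Fq x)

/-- A linear rank-metric code is intersecting if the supports of any two nonzero
codewords meet nontrivially. -/
def RankIntersecting {n : ℕ} (C : Submodule L (Fin n → L)) : Prop :=
  ∀ c ∈ C, ∀ c' ∈ C, c ≠ 0 → c' ≠ 0 → rsupp Fq c ⊓ rsupp Fq c' ≠ ⊥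

/-- A rank-metric code is nondegenerate if the supports of its codewords span `Fq^n`. -/
def Nondeg {n : ℕ} (C : Submodule L (Fin n → L)) : Prop :=
  (⨆ c ∈ C, rsupp Fq c) = ⊤

/-- An `L`-hyperplane of `L^k`. -/
def IsHyperplane {k : ℕ} (H : Submodule L (Fin k → L)) : Prop :=
  ∃ φ : (Fin k → L) →ₗ[L] L, φ ≠ 0 ∧ H = LinearMap.ker φ

/-- A `q`-system `U` is 2-spannable if it is spanned by its intersections with two
`L`-hyperplanes. -/
def TwoSpannable {k : ℕ} (U : Submodule Fq (Fin k → L)) : Prop :=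
  ∃ H₁ H₂ : Submodule L (Fin k → L), IsHyperplane H₁ ∧ IsHyperplane H₂ ∧
    U = (U ⊓ H₁.restrictScalars Fq) ⊔ (U ⊓ H₂.restrictScalars Fq)

/-- A minimal rank-metric code. -/
def MinimalCode {n : ℕ} (C : Submodule L (Fin n → L)) : Prop :=
  ∀ c ∈ C, ∀ c' ∈ C, rsupp Fq c ≤ rsupp Fq c' → ∃ lam : L, c' = lam • c

/-- an `[2m,k]` system avoiding a codimension-2 subspace `M` is
2-spannable: for any two distinct hyperplanes through `M`, `U` is the direct sum of
its intersections with them. -/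
theorem stmt14 [FiniteDimensional Fq L] {k m n : ℕ} (hm : m = finrank Fq L)
    (hn : n = 2 * m) (U : Submodule Fq (Fin k → L)) (hU : finrank Fq U = n)
    (hspan : Submodule.span L (U : Set (Fin k → L)) = ⊤)
    (M : Submodule L (Fin k → L)) (hM : finrank L M + 2 = k)
    (hdisj : U ⊓ M.restrictScalars Fq = ⊥) :
    TwoSpannable Fq U ∧
      ∀ H₁ H₂ : Submodule L (Fin k → L), IsHyperplane H₁ → IsHyperplane H₂ → H₁ ≠ H₂ →
        M ≤ H₁ → M ≤ H₂ →
          U = (U ⊓ H₁.restrictScalars Fq) ⊔ (U ⊓ H₂.restrictScalars Fq) ∧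
          (U ⊓ H₁.restrictScalars Fq) ⊓ (U ⊓ H₂.restrictScalars Fq) = ⊥ := by
  classical
  haveI : Module.Finite Fq (Fin k → L) := Module.Finite.trans L _
  have hkL : finrank L (Fin k → L) = k := Module.finrank_fin_fun L
  have hFqV : finrank Fq (Fin k → L) = m * k := by
    rw [hm, ← Module.finrank_mul_finrank Fq L (Fin k → L), hkL]
  -- dimension of a hyperplane
  have hyp_dim : ∀ H : Submodule L (Fin k → L), IsHyperplane H → finrank L H + 1 = k := by
    rintro H ⟨φ, hφ, rfl⟩
    have hr : LinearMap.range φ = ⊤ := by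
      obtain ⟨x, hx⟩ : ∃ x, φ x ≠ 0 := by
        by_contra h
        push_neg at h
        exact hφ (LinearMap.ext h)
      rw [LinearMap.range_eq_top]
      intro y
      exact ⟨(y / φ x) • x, by rw [map_smul, smul_eq_mul]; field_simp⟩
    have := LinearMap.finrank_range_add_finrank_ker φ
    rw [hr, finrank_top, Module.finrank_self, hkL] at this
    omega
  -- Fq-dimension of restricted scalars of an L-subspace
  have resdim : ∀ W : Submodule L (Fin k → L),
      finrank Fq (W.restrictScalars Fq) = m * finrank L W := by
    intro W
    rw [hm, Module.finrank_mul_finrank Fq L (↥W)]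
    exact ((W.restrictScalarsEquiv Fq).restrictScalars Fq).finrank_eq
  -- restrictScalars commutes with inf
  have resinf : ∀ W₁ W₂ : Submodule L (Fin k → L),
      (W₁ ⊓ W₂).restrictScalars Fq = W₁.restrictScalars Fq ⊓ W₂.restrictScalars Fq := by
    intro W₁ W₂; ext x; simp [Submodule.mem_inf, Submodule.restrictScalars_mem]
  -- the main statement for any pair of distinct hyperplanes through M
  have key : ∀ H₁ H₂ : Submodule L (Fin k → L), IsHyperplane H₁ → IsHyperplane H₂ →
      H₁ ≠ H₂ → M ≤ H₁ → M ≤ H₂ →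
      U = (U ⊓ H₁.restrictScalars Fq) ⊔ (U ⊓ H₂.restrictScalars Fq) ∧
        (U ⊓ H₁.restrictScalars Fq) ⊓ (U ⊓ H₂.restrictScalars Fq) = ⊥ := by
    intro H₁ H₂ hH₁ hH₂ hne hMH₁ hMH₂
    have hd₁ := hyp_dim H₁ hH₁
    have hd₂ := hyp_dim H₂ hH₂
    -- H₁ ⊓ H₂ = M
    have hinfM : H₁ ⊓ H₂ = M := by
      have hle : M ≤ H₁ ⊓ H₂ := le_inf hMH₁ hMH₂
      have hlt : H₁ ⊓ H₂ < H₁ := by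
        rcases lt_or_eq_of_le (inf_le_left : H₁ ⊓ H₂ ≤ H₁) with h | h
        · exact h
        · exfalso
          have h12 : H₁ ≤ H₂ := by
            rw [← h]; exact inf_le_right
          exact hne (Submodule.eq_of_le_of_finrank_le h12 (by omega))
      have hfin : finrank L ↥(H₁ ⊓ H₂) < finrank L H₁ :=
        Submodule.finrank_lt_finrank_of_lt hlt
      exact (Submodule.eq_of_le_of_finrank_le hle (by omega)).symm
    set A := U ⊓ H₁.restrictScalars Fq with hA
    set B := U ⊓ H₂.restrictScalars Fq with hB
    have hABbot : A ⊓ B = ⊥ := by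
      rw [hA, hB, inf_inf_inf_comm, inf_idem, ← resinf, hinfM, hdisj]
    refine ⟨?_, hABbot⟩
    -- lower bound on dimensions of A and B
    have dimA : ∀ (H : Submodule L (Fin k → L)), IsHyperplane H →
        m ≤ finrank Fq ↥(U ⊓ H.restrictScalars Fq) := by
      intro H hH
      have h1 := Submodule.finrank_sup_add_finrank_inf_eq U (H.restrictScalars Fq)
      have h2 : finrank Fq ↥(U ⊔ H.restrictScalars Fq) ≤ m * k := by
        rw [← hFqV]; exact Submodule.finrank_le _
      have h3 : finrank Fq ↥(H.restrictScalars Fq) = m * finrank L H := resdim H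
      have h4 := hyp_dim H hH
      have hUn : finrank Fq U = 2 * m := by rw [hU, hn]
      have h5 : m * finrank L ↥H + m = m * k := by
        calc m * finrank L ↥H + m = m * (finrank L ↥H + 1) := by ring
          _ = m * k := by rw [h4]
      omega
    have hAB : finrank Fq ↥(A ⊔ B) = finrank Fq ↥A + finrank Fq ↥B := by
      have := Submodule.finrank_sup_add_finrank_inf_eq A B
      rw [hABbot, finrank_bot] at this
      omega
    have hle : A ⊔ B ≤ U := sup_le inf_le_left inf_le_left
    have hdim : finrank Fq ↥U ≤ finrank Fq ↥(A ⊔ B) := by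
      have t1 := dimA H₁ hH₁
      have t2 := dimA H₂ hH₂
      rw [← hA] at t1
      rw [← hB] at t2
      rw [hAB, hU, hn]
      omega
    exact (Submodule.eq_of_le_of_finrank_le hle hdim).symm
  refine ⟨?_, key⟩
  -- construct two distinct hyperplanes through M
  have hQ : finrank L ((Fin k → L) ⧸ M) = 2 := by
    have := Submodule.finrank_quotient_add_finrank M
    rw [hkL] at this
    omega
  let b := finBasisOfFinrankEq L ((Fin k → L) ⧸ M) hQ
  let ψ : Fin 2 → (((Fin k → L) ⧸ M) →ₗ[L] L) := fun i => b.coord i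
  let φ : Fin 2 → ((Fin k → L) →ₗ[L] L) := fun i => (ψ i).comp M.mkQ
  have hψb : ∀ i j : Fin 2, ψ i (b j) = if j = i then 1 else 0 := by
    intro i j
    simp [ψ, Basis.coord_apply, Basis.repr_self, Finsupp.single_apply]
  have hφ0 : ∀ i : Fin 2, φ i ≠ 0 := by
    intro i h
    obtain ⟨x, hx⟩ := M.mkQ_surjective (b i)
    have : ψ i (b i) = 0 := by
      rw [← hx]
      exact congrFun (congrArg DFunLike.coe h) x
    rw [hψb i i, if_pos rfl] at this
    exact one_ne_zero this
  have hMk : ∀ i : Fin 2, M ≤ LinearMap.ker (φ i) := by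
    intro i x hx
    simp [φ, LinearMap.mem_ker, (Submodule.Quotient.mk_eq_zero M).mpr hx]
  have hker_ne : LinearMap.ker (φ 0) ≠ LinearMap.ker (φ 1) := by
    intro h
    obtain ⟨x, hx⟩ := M.mkQ_surjective (b 0)
    have h0 : x ∈ LinearMap.ker (φ 1) := by
      simp [φ, LinearMap.mem_ker, hx, hψb 1 0]
    rw [← h] at h0
    have h1 : ψ 0 (b 0) = 0 := by
      have := LinearMap.mem_ker.mp h0
      simpa [φ, hx] using this
    rw [hψb 0 0, if_pos rfl] at h1
    exact one_ne_zero h1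
  exact ⟨LinearMap.ker (φ 0), LinearMap.ker (φ 1), ⟨φ 0, hφ0 0, rfl⟩, ⟨φ 1, hφ0 1, rfl⟩,
    (key _ _ ⟨φ 0, hφ0 0, rfl⟩ ⟨φ 1, hφ0 1, rfl⟩ hker_ne (hMk 0) (hMk 1)).1⟩
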